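/- Under the stated assumptions, for every fixed g ∈ E, the linear maps v ↦ v ⊛_θ g and v ↦ g ⊛_θ v are continuous from the strong dual E′ (topology of uniform convergence on bounded subsets of E) into the space C(ℝ^d, ℂ) of continuous functions with the compact-open topology. (Proposition 1, continuity in v.) -/

import Mathlib

/-!
STATEMENT 1 (Proposition 1, continuity in `v`).
For every fixed `g ∈ E`, the linear maps `v ↦ v ⊛_θ g` and `v ↦ g ⊛_θ v` are
continuous from the strong dual `E′` (which is `E →L[ℂ] ℂ` with its canonical
topology of uniform convergence on bounded sets) into `C(ℝ^d, ℂ)` with the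
compact-open topology.
-/

open Bornology Topology

/-- Joint continuity of `(v, s) ↦ v (f s)` for a continuous `f : ℝ^d → E`,
where the dual carries the strong topology. -/
lemma twisted_conv_eval_aux {E : Type*} [AddCommGroup E] [Module ℂ E]
    [TopologicalSpace E] [IsTopologicalAddGroup E] [ContinuousSMul ℂ E] {d : ℕ}
    (f : (Fin d → ℝ) → E) (hf : Continuous f) :
    Continuous fun p : (E →L[ℂ] ℂ) × (Fin d → ℝ) => p.1 (f p.2) := by
  rw [continuous_iff_continuousAt]
  rintro ⟨v₀, s₀⟩
  rw [ContinuousAt, Metric.tendsto_nhds]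
  intro ε hε
  obtain ⟨U, hUc, hU⟩ := exists_compact_mem_nhds s₀
  have hB : IsVonNBounded ℂ (f '' U) := by
    letI : UniformSpace E := IsTopologicalAddGroup.rightUniformSpace E
    haveI : IsUniformAddGroup E := isUniformAddGroup_of_addCommGroup
    exact (hUc.image hf).totallyBounded.isVonNBounded ℂ
  have h0 : {w : E →L[ℂ] ℂ | ∀ x ∈ f '' U, ‖w x‖ < ε / 2} ∈ 𝓝 (0 : E →L[ℂ] ℂ) := by
    refine ContinuousLinearMap.hasBasis_nhds_zero.mem_iff.mpr
      ⟨⟨f '' U, Metric.ball 0 (ε / 2)⟩, ⟨hB, Metric.ball_mem_nhds _ (by positivity)⟩, ?_⟩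
    intro w hw x hx
    simpa [mem_ball_zero_iff] using hw x hx
  have hW : {w : E →L[ℂ] ℂ | ∀ x ∈ f '' U, ‖w x - v₀ x‖ < ε / 2} ∈ 𝓝 v₀ := by
    have h2 : Filter.Tendsto (fun w : E →L[ℂ] ℂ => w - v₀) (𝓝 v₀) (𝓝 0) := by
      have hsub : Continuous fun w : E →L[ℂ] ℂ => w - v₀ := continuous_id.sub continuous_const
      simpa [ContinuousAt, sub_self] using hsub.continuousAt (x := v₀)
    refine Filter.mem_of_superset (h2 h0) ?_
    intro w hw x hx
    simpa using hw x hx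
  have hc : ContinuousAt (fun s => v₀ (f s)) s₀ := (v₀.continuous.comp hf).continuousAt
  have hV : {s | ‖v₀ (f s) - v₀ (f s₀)‖ < ε / 2} ∈ 𝓝 s₀ := by
    have := Metric.tendsto_nhds.mp hc (ε / 2) (by positivity)
    refine this.mono fun s hs => ?_
    simpa [Complex.dist_eq] using hs
  have hprod : {w : E →L[ℂ] ℂ | ∀ x ∈ f '' U, ‖w x - v₀ x‖ < ε / 2} ×ˢ
      (U ∩ {s | ‖v₀ (f s) - v₀ (f s₀)‖ < ε / 2}) ∈ 𝓝 (v₀, s₀) :=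
    prod_mem_nhds hW (Filter.inter_mem hU hV)
  refine Filter.mem_of_superset hprod ?_
  rintro ⟨w, s⟩ ⟨hw, hsU, hsV⟩
  have h1 : ‖w (f s) - v₀ (f s)‖ < ε / 2 := hw _ ⟨s, hsU, rfl⟩
  calc dist (w (f s)) (v₀ (f s₀)) = ‖(w (f s) - v₀ (f s)) + (v₀ (f s) - v₀ (f s₀))‖ := by
        rw [dist_eq_norm]; congr 1; ring
    _ ≤ ‖w (f s) - v₀ (f s)‖ + ‖v₀ (f s) - v₀ (f s₀)‖ := norm_add_le _ _
    _ < ε / 2 + ε / 2 := add_lt_add h1 hsV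
    _ = ε := by ring

/-- Continuity of `v ↦ (s ↦ v (τ s h))` from the strong dual into `C(ℝ^d, ℂ)`. -/
lemma twisted_conv_cont_aux {E : Type*} [AddCommGroup E] [Module ℂ E]
    [TopologicalSpace E] [IsTopologicalAddGroup E] [ContinuousSMul ℂ E] {d : ℕ}
    (τ : (Fin d → ℝ) → E →L[ℂ] E)
    (hτc : Continuous fun p : (Fin d → ℝ) × E => τ p.1 p.2)
    (h : E)
    (T : (E →L[ℂ] ℂ) → C((Fin d → ℝ), ℂ))
    (hT : ∀ (v : E →L[ℂ] ℂ) (s : Fin d → ℝ), T v s = v (τ s h)) :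
    Continuous T := by
  have hf : Continuous fun s : Fin d → ℝ => τ s h :=
    hτc.comp (continuous_id.prodMk continuous_const)
  refine ContinuousMap.continuous_of_continuous_uncurry T ?_
  have : (Function.uncurry fun v s => T v s) = fun p : (E →L[ℂ] ℂ) × (Fin d → ℝ) =>
      p.1 ((fun s => τ s h) p.2) := by
    funext p; exact hT p.1 p.2
  rw [this]
  exact twisted_conv_eval_aux _ hf

theorem twisted_convolution_continuous_in_v
    (d : ℕ) (hd : 1 ≤ d)
    {E : Type*} [AddCommGroup E] [Module ℝ E] [Module ℂ E] [IsScalarTower ℝ ℂ E]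
    [TopologicalSpace E] [IsTopologicalAddGroup E] [ContinuousSMul ℂ E]
    [LocallyConvexSpace ℝ E]
    -- the bilinear skew-symmetric form θ on ℝ^d
    (θ : (Fin d → ℝ) →ₗ[ℝ] (Fin d → ℝ) →ₗ[ℝ] ℝ)
    (hθ : ∀ s t : Fin d → ℝ, θ s t = - θ t s)
    -- E is regarded as a space of complex-valued functions on ℝ^d via ι
    (ι : E →ₗ[ℂ] ((Fin d → ℝ) → ℂ)) (hι : Function.Injective ι)
    -- the twisted shift operators τ_s and τ̄_s
    (τ τ' : (Fin d → ℝ) → E →L[ℂ] E)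
    (hτ : ∀ (s : Fin d → ℝ) (g : E) (t : Fin d → ℝ),
      ι (τ s g) t = Complex.exp (Complex.I / 2 * ((θ s t : ℝ) : ℂ)) * ι g (t - s))
    (hτ' : ∀ (s : Fin d → ℝ) (g : E) (t : Fin d → ℝ),
      ι (τ' s g) t = Complex.exp (-(Complex.I / 2) * ((θ s t : ℝ) : ℂ)) * ι g (t - s))
    -- joint continuity of the actions (s, g) ↦ τ_s g and (s, g) ↦ τ̄_s g
    (hτc : Continuous fun p : (Fin d → ℝ) × E => τ p.1 p.2)
    (hτ'c : Continuous fun p : (Fin d → ℝ) × E => τ' p.1 p.2)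
    -- the continuous reflection operator g ↦ ǧ
    (R : E →L[ℂ] E) (hR : ∀ (g : E) (t : Fin d → ℝ), ι (R g) t = ι g (-t))
    (g : E)
    -- `T v = v ⊛_θ g` and `T' v = g ⊛_θ v`, regarded as elements of `C(ℝ^d, ℂ)`
    (T T' : (E →L[ℂ] ℂ) → C((Fin d → ℝ), ℂ))
    (hT : ∀ (v : E →L[ℂ] ℂ) (s : Fin d → ℝ), T v s = v (τ s (R g)))
    (hT' : ∀ (v : E →L[ℂ] ℂ) (s : Fin d → ℝ), T' v s = v (τ' s (R g))) :
    Continuous T ∧ Continuous T' :=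
  ⟨twisted_conv_cont_aux τ hτc (R g) T hT, twisted_conv_cont_aux τ' hτ'c (R g) T' hT'⟩
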